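/- Let P^{(1)},…,P^{(k)} be full horizontal rows of the grid G_{m,n} at heights h_1 < h_2 < … < h_k with h_i − h_{i−1} ≥ ⌈√(kn)⌉ for 2 ≤ i ≤ k, and let 𝒫 be the union of their vertex sets. Then the partial burning number satisfies ⌈√(kn)⌉ ≤ b(G_{m,n}, 𝒫) ≤ ⌈√(kn)⌉ + k − 1. -/

import Mathlib

open SimpleGraph

/-- The set of vertices burned after `t` rounds of the burning process on `G`,
where `s i` is the source of fire chosen in round `i + 1`. -/
def burnSet {V : Type*} (G : SimpleGraph V) (s : ℕ → V) : ℕ → Set V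
  | 0 => ∅
  | t + 1 => burnSet G s t ∪ {w | ∃ u ∈ burnSet G s t, G.Adj u w} ∪ {s t}

/-- The partial burning number `b(G, S)`: the least number of rounds needed to
burn every vertex of `S`. -/
noncomputable def pburn {V : Type*} (G : SimpleGraph V) (S : Set V) : ℕ :=
  sInf {r | ∃ s : ℕ → V, S ⊆ burnSet G s r}

/-- The burning number `b(G)`. -/
noncomputable def burn {V : Type*} (G : SimpleGraph V) : ℕ :=
  pburn G Set.univ

/-- The ball of radius `t` around `v` in graph distance. -/
def gball {V : Type*} (G : SimpleGraph V) (v : V) (t : ℕ) : Set V :=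
  {w | G.dist v w ≤ t}

/-- The `m × n` Cartesian grid `P_m □ P_n`; the first coordinate is the height (row). -/
def gridGraph (m n : ℕ) : SimpleGraph (Fin m × Fin n) :=
  (pathGraph m) □ (pathGraph n)

/-! ### Auxiliary lemmas about the burning process -/

lemma burnSet_succ_subset {V : Type*} (G : SimpleGraph V) (s : ℕ → V) (t : ℕ) :
    burnSet G s t ⊆ burnSet G s (t+1) := fun _ hw => Or.inl (Or.inl hw)

lemma burnSet_mono {V : Type*} (G : SimpleGraph V) (s : ℕ → V) {t t' : ℕ} (h : t ≤ t') :
    burnSet G s t ⊆ burnSet G s t' := by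
  induction t' with
  | zero => simp [Nat.le_zero.mp h]
  | succ t' ih =>
    rcases Nat.lt_or_ge t (t'+1) with h' | h'
    · exact (ih (Nat.lt_succ_iff.mp h')).trans (burnSet_succ_subset G s t')
    · have h'' : t = t' + 1 := le_antisymm h h'
      exact h'' ▸ Set.Subset.refl _

lemma source_mem_burnSet {V : Type*} (G : SimpleGraph V) (s : ℕ → V) (t : ℕ) :
    s t ∈ burnSet G s (t+1) := Or.inr rfl

lemma walk_burn {V : Type*} (G : SimpleGraph V) (s : ℕ → V) {u w : V} {t : ℕ}
    (hu : u ∈ burnSet G s t) (W : G.Walk u w) : w ∈ burnSet G s (t + W.length) := by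
  induction W generalizing t with
  | nil => simpa using hu
  | @cons a b c h W ih =>
    have hb : b ∈ burnSet G s (t+1) := Or.inl (Or.inr ⟨_, hu, h⟩)
    have := ih hb
    have heq : t + 1 + W.length = t + (SimpleGraph.Walk.cons h W).length := by
      simp [SimpleGraph.Walk.length_cons]; omega
    rwa [heq] at this

lemma burnSet_ball {V : Type*} (G : SimpleGraph V) (s : ℕ → V) :
    ∀ {t : ℕ} {w : V}, w ∈ burnSet G s t →
      ∃ j, j < t ∧ ∃ W : G.Walk (s j) w, W.length + j + 1 ≤ t := by
  intro t
  induction t with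
  | zero => intro w h; exact absurd h (by simp [burnSet])
  | succ t ih =>
    intro w h
    rcases h with (h | h) | h
    · obtain ⟨j, hj, W, hW⟩ := ih h
      exact ⟨j, hj.trans (Nat.lt_succ_self t), W, hW.trans (Nat.le_succ t)⟩
    · obtain ⟨u, hu, hadj⟩ := h
      obtain ⟨j, hj, W, hW⟩ := ih hu
      refine ⟨j, hj.trans (Nat.lt_succ_self t), W.concat hadj, ?_⟩
      rw [SimpleGraph.Walk.length_concat]; omega
    · refine ⟨t, Nat.lt_succ_self t, ?_⟩
      subst h
      exact ⟨SimpleGraph.Walk.nil, by simp⟩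

/-! ### The ℓ¹ metric on the grid -/

/-- The ℓ¹ distance on the grid. -/
def d1 {m n : ℕ} (p q : Fin m × Fin n) : ℕ :=
  Nat.dist p.1.val q.1.val + Nat.dist p.2.val q.2.val

lemma grid_adj_d1 {m n : ℕ} {p q : Fin m × Fin n} (h : (gridGraph m n).Adj p q) :
    d1 p q = 1 := by
  rcases (SimpleGraph.boxProd_adj).mp h with ⟨h1, h2⟩ | ⟨h1, h2⟩
  · rcases (SimpleGraph.pathGraph_adj).mp h1 with h' | h' <;>
      simp [d1, h2, Nat.dist] <;> omega
  · rcases (SimpleGraph.pathGraph_adj).mp h1 with h' | h' <;>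
      simp [d1, h2, Nat.dist] <;> omega

lemma d1_le_walk {m n : ℕ} {p q : Fin m × Fin n} (W : (gridGraph m n).Walk p q) :
    d1 p q ≤ W.length := by
  induction W with
  | nil => simp [d1]
  | @cons a b c h W ih =>
    have h1 : d1 a b = 1 := grid_adj_d1 h
    have htri : d1 a c ≤ d1 a b + d1 b c := by
      simp only [d1]
      have := Nat.dist.triangle_inequality a.1.val b.1.val c.1.val
      have := Nat.dist.triangle_inequality a.2.val b.2.val c.2.val
      omega
    simp only [SimpleGraph.Walk.length_cons]
    omega

lemma path_walk {n : ℕ} (a b : Fin n) :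
    ∃ W : (pathGraph n).Walk a b, W.length = Nat.dist a.val b.val := by
  rcases le_or_gt a.val b.val with hab | hab
  · obtain ⟨d, hd⟩ : ∃ d, b.val = a.val + d := ⟨b.val - a.val, by omega⟩
    clear hab
    induction d generalizing b with
    | zero =>
      have : a = b := Fin.ext (by omega)
      subst this
      exact ⟨SimpleGraph.Walk.nil, by simp [Nat.dist]⟩
    | succ d ih =>
      have hb : b.val = a.val + d + 1 := by omega
      have hlt : a.val + d < n := by omega
      set b' : Fin n := ⟨a.val + d, hlt⟩ with hb'
      obtain ⟨W, hW⟩ := ih b' rfl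
      have hadj : (pathGraph n).Adj b' b := by
        rw [SimpleGraph.pathGraph_adj]; left; simp [hb']; omega
      refine ⟨W.concat hadj, ?_⟩
      rw [SimpleGraph.Walk.length_concat, hW]
      simp [Nat.dist, hb']; omega
  · obtain ⟨W, hW⟩ : ∃ W : (pathGraph n).Walk b a, W.length = Nat.dist b.val a.val := by
      obtain ⟨d, hd⟩ : ∃ d, a.val = b.val + d := ⟨a.val - b.val, by omega⟩
      clear hab
      induction d generalizing a with
      | zero =>
        have : b = a := Fin.ext (by omega)
        subst this
        exact ⟨SimpleGraph.Walk.nil, by simp [Nat.dist]⟩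
      | succ d ih =>
        have hlt : b.val + d < n := by omega
        set a' : Fin n := ⟨b.val + d, hlt⟩
        obtain ⟨W, hW⟩ := ih a' rfl
        have hadj : (pathGraph n).Adj a' a := by
          rw [SimpleGraph.pathGraph_adj]; left; simp [a']; omega
        refine ⟨W.concat hadj, ?_⟩
        rw [SimpleGraph.Walk.length_concat, hW]
        simp [Nat.dist, a']; omega
    exact ⟨W.reverse, by rw [SimpleGraph.Walk.length_reverse, hW, Nat.dist_comm]⟩

lemma grid_walk {m n : ℕ} (p q : Fin m × Fin n) :
    ∃ W : (gridGraph m n).Walk p q, W.length = d1 p q := by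
  obtain ⟨W1, hW1⟩ := path_walk p.1 q.1
  obtain ⟨W2, hW2⟩ := path_walk p.2 q.2
  refine ⟨((W1.boxProdLeft (pathGraph n) p.2).append
      (W2.boxProdRight (pathGraph m) q.1)), ?_⟩
  erw [SimpleGraph.Walk.length_append]
  simp [SimpleGraph.Walk.boxProdLeft, SimpleGraph.Walk.boxProdRight, SimpleGraph.Walk.length_map, d1, hW1, hW2]
  exact congrArg₂ (· + ·) ((SimpleGraph.Walk.length_map _ _).trans hW1)
    ((SimpleGraph.Walk.length_map _ _).trans hW2)

/-! ### Ceiling of square roots -/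

/-- `⌈√x⌉` for a natural number `x`. -/
noncomputable def csq (x : ℕ) : ℕ := ⌈Real.sqrt x⌉₊

lemma le_sq_csq (x : ℕ) : x ≤ (csq x)^2 := by
  unfold csq
  have h := Nat.le_ceil (Real.sqrt x)
  have hx : (0:ℝ) ≤ (x:ℝ) := by positivity
  have h2 : (x:ℝ) ≤ ((⌈Real.sqrt x⌉₊ : ℕ):ℝ)^2 := by
    have := Real.sq_sqrt hx
    nlinarith [Real.sqrt_nonneg (x:ℝ)]
  exact_mod_cast h2

lemma csq_pos {x : ℕ} (hx : 1 ≤ x) : 1 ≤ csq x := by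
  have : (0:ℝ) < Real.sqrt x := Real.sqrt_pos.mpr (by exact_mod_cast hx)
  exact Nat.one_le_iff_ne_zero.mpr (by
    simp only [csq, ne_eq, Nat.ceil_eq_zero, not_le]; exact this)

lemma pred_sq_lt_csq {x : ℕ} (hx : 1 ≤ x) : (csq x - 1)^2 < x := by
  have h1 : csq x - 1 < ⌈Real.sqrt x⌉₊ := by
    have := csq_pos hx; unfold csq at *; omega
  have h2 : ((csq x - 1 : ℕ):ℝ) < Real.sqrt x := Nat.lt_ceil.mp h1
  have h3 : ((csq x - 1 : ℕ):ℝ)^2 < (x:ℝ) := by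
    have hx0 : (0:ℝ) ≤ (x:ℝ) := by positivity
    have := Real.sq_sqrt hx0
    nlinarith [Nat.cast_nonneg (α := ℝ) (csq x - 1)]
  exact_mod_cast h3

lemma csq_mono {x y : ℕ} (h : x ≤ y) : csq x ≤ csq y :=
  Nat.ceil_mono (Real.sqrt_le_sqrt (by exact_mod_cast h))

lemma sum_odd (t : ℕ) : ∑ j ∈ Finset.range t, (2*j+1) = t^2 := by
  induction t with
  | zero => simp
  | succ t ih => rw [Finset.sum_range_succ, ih]; ring

/-! ### Covering one row of length `n` -/

lemma row_cover (n M d : ℕ) (hn : 1 ≤ n) (hd : d ≤ M) (hcov : n ≤ d * (2*M - d)) :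
    ∃ g : ℕ → ℕ, (∀ j, g j < n) ∧ ∀ z < n, ∃ j < d, Nat.dist (g j) z ≤ M - 1 - j := by
  set p : ℕ → ℕ := fun j => Nat.rec 0 (fun j pj => pj + (2*(M-1-j)+1)) j with hpdef
  have hpsucc : ∀ j, p (j+1) = p j + (2*(M-1-j)+1) := fun j => rfl
  have hp : ∀ j, j ≤ M → p j = j * (2*M - j) := by
    intro j
    induction j with
    | zero => intro _; simp [hpdef]
    | succ j ih =>
      intro hj
      have hj' : j ≤ M := by omega
      rw [hpsucc, ih hj']
      have h1 : j < M := by omega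
      zify [Nat.le_of_lt h1, hj, (by omega : 1 + j ≤ M), (by omega : j ≤ 2*M),
        (by omega : j + 1 ≤ 2*M), (by omega : 1 ≤ M)]
      ring_nf
      omega
  have hfind : ∀ e z, z < p e → ∃ j < e, p j ≤ z ∧ z < p (j+1) := by
    intro e
    induction e with
    | zero => intro z h; simp [hpdef] at h
    | succ e ih =>
      intro z h
      rcases Nat.lt_or_ge z (p e) with h' | h'
      · obtain ⟨j, hj, h1, h2⟩ := ih z h'
        exact ⟨j, by omega, h1, h2⟩
      · exact ⟨e, by omega, h', h⟩
  refine ⟨fun j => min (p j + (M-1-j)) (n-1), fun j => by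
    show min (p j + (M-1-j)) (n-1) < n
    have := Nat.min_le_right (p j + (M-1-j)) (n-1); omega, ?_⟩
  intro z hz
  have hzpd : z < p d := by
    have := hp d hd
    omega
  obtain ⟨j, hj, h1, h2⟩ := hfind d z hzpd
  rw [hpsucc] at h2
  refine ⟨j, hj, ?_⟩
  show Nat.dist (min (p j + (M-1-j)) (n-1)) z ≤ M - 1 - j
  rcases le_or_gt (p j + (M-1-j)) (n-1) with hc | hc
  · rw [min_eq_left hc, Nat.dist]
    omega
  · rw [min_eq_right (le_of_lt hc), Nat.dist]
    omega

/-! ### Covering `K+1` rows within `M` rounds -/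

lemma cover (n : ℕ) (hn : 1 ≤ n) : ∀ K M, csq ((K+1) * n) + K ≤ M →
    ∃ f : ℕ → ℕ × ℕ, (∀ j, (f j).2 < n) ∧
      ∀ i ≤ K, ∀ z < n, ∃ j < M, (f j).1 = i ∧ Nat.dist (f j).2 z ≤ M - 1 - j := by
  intro K
  induction K with
  | zero =>
    intro M hM
    simp only [Nat.zero_add, one_mul] at hM
    set a := csq n with ha
    have h1 : n ≤ a * (2*M - a) := by
      have := le_sq_csq n
      calc n ≤ a^2 := this
        _ = a * a := sq a
        _ ≤ a * (2*M - a) := Nat.mul_le_mul_left a (by omega)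
    obtain ⟨g, hg1, hg2⟩ := row_cover n M a hn (by omega) h1
    refine ⟨fun j => (0, g j), fun j => hg1 j, ?_⟩
    intro i hi z hz
    obtain ⟨j, hj, hd⟩ := hg2 z hz
    refine ⟨j, by omega, ?_, ?_⟩
    · show (0 : ℕ) = i
      omega
    · show Nat.dist (g j) z ≤ M - 1 - j
      exact hd
  | succ K ih =>
    intro M hM
    set a := csq ((K+2) * n) with ha
    set b := csq ((K+1) * n) with hb
    have hba : b ≤ a := csq_mono (by nlinarith)
    have hb1 : 1 ≤ b := csq_pos (by nlinarith)
    have hMa : a + (K+1) ≤ M := by omega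
    set d := a - b + 1 with hd
    have hkey : n < d * (a + b - 1) := by
      have h1 : (K+2)*n ≤ a^2 := le_sq_csq _
      have h2 : (b-1)^2 < (K+1)*n := pred_sq_lt_csq (by nlinarith)
      zify [hba, hb1, (by omega : 1 ≤ a + b)] at *
      nlinarith
    have hdM : d ≤ M := by omega
    have h2M : a + b - 1 ≤ 2*M - d := by omega
    have hcov : n ≤ d * (2*M - d) :=
      le_trans (le_of_lt hkey) (Nat.mul_le_mul_left d h2M)
    obtain ⟨g, hg1, hg2⟩ := row_cover n M d hn hdM hcov
    have hM' : csq ((K+1) * n) + K ≤ M - d := by omega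
    obtain ⟨f', hf1, hf2⟩ := ih (M - d) hM'
    refine ⟨fun j => if j < d then (K+1, g j) else f' (j - d), ?_, ?_⟩
    · intro j
      by_cases h : j < d <;> simp [h, hg1, hf1]
    · intro i hi z hz
      rcases Nat.eq_or_lt_of_le hi with he | hlt
      · obtain ⟨j, hj, hdist⟩ := hg2 z hz
        refine ⟨j, by omega, ?_, ?_⟩
        · show (if j < d then ((K+1 : ℕ), g j) else f' (j - d)).1 = i
          rw [if_pos hj]; omega
        · show Nat.dist (if j < d then ((K+1 : ℕ), g j) else f' (j - d)).2 z ≤ M - 1 - j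
          rw [if_pos hj]; exact hdist
      · obtain ⟨l, hl, hfl, hdist⟩ := hf2 i (by omega) z hz
        refine ⟨l + d, by omega, ?_, ?_⟩
        · show (if l + d < d then ((K+1 : ℕ), g (l+d)) else f' (l + d - d)).1 = i
          rw [if_neg (by omega)]
          simpa using hfl
        · show Nat.dist (if l + d < d then ((K+1 : ℕ), g (l+d)) else f' (l + d - d)).2 z
            ≤ M - 1 - (l + d)
          rw [if_neg (by omega)]
          have h1 : l + d - d = l := by omega
          rw [h1]
          have h2 : M - 1 - (l + d) = M - d - 1 - l := by omega
          rw [h2]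
          exact hdist

/-! ### Main theorem -/

/-- If `P^{(1)}, …, P^{(k)}` are full rows of `G_{m,n}` at heights pairwise at least
`⌈√(kn)⌉` apart, and `𝒫` is the union of their vertex sets, then
`⌈√(kn)⌉ ≤ b(G_{m,n}, 𝒫) ≤ ⌈√(kn)⌉ + k - 1`. -/
theorem pburn_far_rows (m n k : ℕ) (hk : 1 ≤ k) (hn : 1 ≤ n)
    (hgt : Fin k → Fin m) (hmono : StrictMono hgt)
    (hgap : ∀ i j : Fin k, (i : ℕ) + 1 = (j : ℕ) →
      ⌈Real.sqrt (k * n)⌉₊ ≤ (hgt j : ℕ) - (hgt i : ℕ)) :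
    ⌈Real.sqrt (k * n)⌉₊ ≤
        pburn (gridGraph m n) {p : Fin m × Fin n | ∃ i : Fin k, p.1 = hgt i} ∧
      pburn (gridGraph m n) {p : Fin m × Fin n | ∃ i : Fin k, p.1 = hgt i} ≤
        ⌈Real.sqrt (k * n)⌉₊ + k - 1 := by
  classical
  set r := csq (k * n) with hrdef
  have hrcast : ⌈Real.sqrt (k * n)⌉₊ = r := by
    rw [hrdef, csq]; push_cast; ring_nf
  set S : Set (Fin m × Fin n) := {p | ∃ i : Fin k, p.1 = hgt i} with hS
  have hkn1 : 1 ≤ k * n := Nat.one_le_iff_ne_zero.mpr (by positivity)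
  have hr1 : 1 ≤ r := csq_pos hkn1
  -- derived gap facts
  have hgap' : ∀ i i' : Fin k, i < i' → (hgt i).val + r ≤ (hgt i').val := by
    intro i i' h
    have h1 : i.val + 1 ≤ i'.val := Fin.lt_def.mp h
    have h2 : i.val + 1 < k := lt_of_le_of_lt h1 i'.isLt
    set isucc : Fin k := ⟨i.val + 1, h2⟩ with hisucc
    have h3 := hgap i isucc (by simp [hisucc])
    rw [hrcast] at h3
    have h4 : hgt i < hgt isucc := hmono (by rw [Fin.lt_def]; simp [hisucc])
    have h5 : hgt isucc ≤ hgt i' := hmono.monotone (by rw [Fin.le_def]; simp [hisucc]; omega)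
    have h6 : (hgt i).val < (hgt isucc).val := Fin.lt_def.mp h4
    have h7 : (hgt isucc).val ≤ (hgt i').val := Fin.le_def.mp h5
    omega
  have hgap2 : ∀ i i' : Fin k, i.val + 2 ≤ i'.val → (hgt i).val + 2*r ≤ (hgt i').val := by
    intro i i' h
    have h2 : i.val + 1 < k := by have := i'.isLt; omega
    set mid : Fin k := ⟨i.val + 1, h2⟩ with hmid
    have h3 := hgap' i mid (by rw [Fin.lt_def]; simp [hmid])
    have h4 := hgap' mid i' (by rw [Fin.lt_def]; simp [hmid]; omega)
    omega
  -- the total burning time for the upper bound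
  set T := r + (k - 1) with hT
  -- upper bound: membership of T
  have hmemT : T ∈ {t | ∃ s : ℕ → Fin m × Fin n, S ⊆ burnSet (gridGraph m n) s t} := by
    have hck : (k - 1 + 1) * n = k * n := by
      congr 1; omega
    obtain ⟨f, hf1, hf2⟩ := cover n hn (k-1) T (by rw [hck])
    set s : ℕ → Fin m × Fin n := fun j =>
      (hgt ⟨min (f j).1 (k-1), by omega⟩, ⟨(f j).2, hf1 j⟩) with hsdef
    refine ⟨s, ?_⟩
    rintro ⟨x, z⟩ ⟨i, hi⟩
    simp only at hi
    obtain ⟨j, hj, hfj, hdist⟩ := hf2 i.val (by omega) z.val z.isLt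
    have hrow : (s j).1 = hgt i := by
      show hgt ⟨min (f j).1 (k-1), _⟩ = hgt i
      congr 1
      apply Fin.ext
      show min (f j).1 (k-1) = i.val
      have := i.isLt
      rw [hfj]
      omega
    have hd1 : d1 (s j) (x, z) ≤ T - 1 - j := by
      show Nat.dist ((s j).1 : ℕ) ((x, z).1 : Fin m).val
          + Nat.dist ((s j).2 : ℕ) ((x, z).2 : Fin n).val ≤ T - 1 - j
      have h2 : Nat.dist ((s j).1 : ℕ) (x : ℕ) = 0 := by
        rw [hrow, hi, Nat.dist_self]
      have h3 : ((s j).2 : ℕ) = (f j).2 := rfl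
      rw [h2, h3]
      simpa using hdist
    obtain ⟨W, hW⟩ := grid_walk (s j) (x, z)
    have hsrc : s j ∈ burnSet (gridGraph m n) s (j+1) := source_mem_burnSet _ s j
    have hburn := walk_burn (gridGraph m n) s hsrc W
    refine burnSet_mono (gridGraph m n) s ?_ hburn
    omega
  constructor
  · -- lower bound
    rw [hrcast]
    refine le_csInf ⟨T, hmemT⟩ ?_
    rintro t ⟨s, hs⟩
    by_contra hlt
    push_neg at hlt
    have ht : t ≤ r - 1 := by omega
    -- counting argument
    set F : Finset (Fin m × Fin n) :=
      Finset.univ.filter (fun p => ∃ i : Fin k, p.1 = hgt i) with hF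
    have hinj : Function.Injective (fun q : Fin k × Fin n => (hgt q.1, q.2)) := by
      rintro ⟨a, b⟩ ⟨a', b'⟩ h
      simp only [Prod.mk.injEq] at h
      exact Prod.ext (hmono.injective h.1) h.2
    have hcardF : F.card = k * n := by
      have himg : F = Finset.image (fun q : Fin k × Fin n => (hgt q.1, q.2)) Finset.univ := by
        ext p
        simp only [hF, Finset.mem_filter, Finset.mem_univ, true_and, Finset.mem_image]
        constructor
        · rintro ⟨i, hi⟩
          exact ⟨(i, p.2), by simp [← hi]⟩
        · rintro ⟨q, hq⟩
          exact ⟨q.1, by rw [← hq]⟩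
      rw [himg, Finset.card_image_of_injective _ hinj, Finset.card_univ]
      simp
    set A : ℕ → Finset (Fin m × Fin n) := fun j =>
      Finset.univ.filter (fun p => (∃ i : Fin k, p.1 = hgt i) ∧ d1 (s j) p ≤ t - 1 - j) with hA
    have hsub : F ⊆ (Finset.range t).biUnion A := by
      intro p hp
      have hpS : p ∈ S := by
        simp only [hF, Finset.mem_filter] at hp
        exact hp.2
      obtain ⟨j, hj, W, hW⟩ := burnSet_ball (gridGraph m n) s (hs hpS)
      have hd := d1_le_walk W
      rw [Finset.mem_biUnion]
      refine ⟨j, Finset.mem_range.mpr hj, ?_⟩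
      simp only [hA, Finset.mem_filter, Finset.mem_univ, true_and]
      refine ⟨?_, by omega⟩
      simpa [hF, Finset.mem_filter] using hp
    -- bounding the cardinality of each A j
    have hcount : ∀ j < t, (A j).card ≤ 2*(t - 1 - j) + 1 := by
      intro j hj
      set ρ := t - 1 - j with hρ
      have hρr : ρ + 2 ≤ r := by omega
      set x : Fin m := (s j).1 with hx
      set y : Fin n := (s j).2 with hy
      set B : Fin k → Finset (Fin m × Fin n) := fun i =>
        Finset.univ.filter (fun p => p.1 = hgt i ∧ d1 (s j) p ≤ ρ) with hB
      have hAB : A j ⊆ Finset.univ.biUnion B := by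
        intro p hp
        simp only [hA, Finset.mem_filter, Finset.mem_univ, true_and] at hp
        obtain ⟨⟨i, hi⟩, hd⟩ := hp
        rw [Finset.mem_biUnion]
        exact ⟨i, Finset.mem_univ _, by
          simp only [hB, Finset.mem_filter, Finset.mem_univ, true_and]
          exact ⟨hi, hd⟩⟩
      have hcard1 : (A j).card ≤ ∑ i : Fin k, (B i).card :=
        le_trans (Finset.card_le_card hAB) (Finset.card_biUnion_le)
      -- bound each B i
      have hBbound : ∀ i : Fin k, Nat.dist x.val (hgt i).val ≤ ρ →
          (B i).card ≤ 2*(ρ - Nat.dist x.val (hgt i).val) + 1 := by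
        intro i hai
        set a := Nat.dist x.val (hgt i).val with haa
        have hmap : (B i).card ≤ (Finset.Icc (y.val - (ρ - a)) (y.val + (ρ - a))).card := by
          apply Finset.card_le_card_of_injOn (fun p => p.2.val)
          · intro p hp
            simp only [Finset.mem_coe, hB, Finset.mem_filter, Finset.mem_univ, true_and] at hp
            obtain ⟨h1, h2⟩ := hp
            unfold d1 at h2
            rw [h1] at h2
            have : Nat.dist y.val p.2.val ≤ ρ - a := by
              rw [← hx, ← hy] at h2
              omega
            rw [Finset.mem_coe, Finset.mem_Icc]; beta_reduce
            rw [Nat.dist] at this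
            omega
          · intro p hp p' hp' he
            simp only [Finset.mem_coe, hB, Finset.mem_filter, Finset.mem_univ,
              true_and] at hp hp'
            exact Prod.ext (hp.1.trans hp'.1.symm) (Fin.ext he)
        have : (Finset.Icc (y.val - (ρ - a)) (y.val + (ρ - a))).card ≤ 2*(ρ - a) + 1 := by
          rw [Nat.card_Icc]
          omega
        omega
      have hBempty : ∀ i : Fin k, ρ < Nat.dist x.val (hgt i).val → (B i) = ∅ := by
        intro i hai
        rw [Finset.eq_empty_iff_forall_notMem]
        intro p hp
        simp only [hB, Finset.mem_filter, Finset.mem_univ, true_and] at hp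
        obtain ⟨h1, h2⟩ := hp
        unfold d1 at h2
        rw [h1, ← hx] at h2
        omega
      -- the set of rows within distance ρ
      set I : Finset (Fin k) := Finset.univ.filter
        (fun i => Nat.dist x.val (hgt i).val ≤ ρ) with hI
      have hsumI : ∑ i : Fin k, (B i).card = ∑ i ∈ I, (B i).card := by
        symm
        apply Finset.sum_subset (Finset.subset_univ I)
        intro i _ hiI
        simp only [hI, Finset.mem_filter, Finset.mem_univ, true_and, not_le] at hiI
        rw [hBempty i hiI, Finset.card_empty]
      -- no two rows in I differ by at least 2 in index
      have hno2 : ∀ i ∈ I, ∀ i' ∈ I, i.val + 2 ≤ i'.val → False := by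
        intro i hi i' hi' hdiff
        simp only [hI, Finset.mem_filter, Finset.mem_univ, true_and] at hi hi'
        have h2 := hgap2 i i' hdiff
        have htri : Nat.dist (hgt i).val (hgt i').val ≤
            Nat.dist x.val (hgt i).val + Nat.dist x.val (hgt i').val := by
          have := Nat.dist.triangle_inequality (hgt i).val x.val (hgt i').val
          rw [Nat.dist_comm (hgt i).val x.val] at this
          exact this
        have hge : (hgt i').val - (hgt i).val ≤ Nat.dist (hgt i).val (hgt i').val := by
          rw [Nat.dist]; omega
        omega
      -- pairwise bound on the sum
      have hsum : ∑ i ∈ I, (B i).card ≤ 2*ρ + 1 := by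
        by_cases hIe : I = ∅
        · simp [hIe]
        · have hIne : I.Nonempty := Finset.nonempty_iff_ne_empty.mpr hIe
          set i0 := I.min' hIne with hi0
          have hi0I : i0 ∈ I := I.min'_mem hIne
          by_cases hIe2 : I.erase i0 = ∅
          · have : I = {i0} := by
              apply Finset.eq_singleton_iff_unique_mem.mpr
              refine ⟨hi0I, ?_⟩
              intro i hiI
              by_contra hne
              exact absurd (Finset.mem_erase.mpr ⟨hne, hiI⟩) (by rw [hIe2]; simp)
            rw [this, Finset.sum_singleton]
            have ha0 : Nat.dist x.val (hgt i0).val ≤ ρ := by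
              have := hi0I
              simp only [hI, Finset.mem_filter, Finset.mem_univ, true_and] at this
              exact this
            have := hBbound i0 ha0
            omega
          · have hIne2 : (I.erase i0).Nonempty := Finset.nonempty_iff_ne_empty.mpr hIe2
            set i1 := (I.erase i0).min' hIne2 with hi1
            have hi1mem : i1 ∈ I.erase i0 := (I.erase i0).min'_mem hIne2
            have hi1I : i1 ∈ I := Finset.mem_of_mem_erase hi1mem
            have hne01 : i1 ≠ i0 := Finset.ne_of_mem_erase hi1mem
            have hlt01 : i0 < i1 := by
              rcases lt_or_eq_of_le (I.min'_le i1 hi1I) with h | h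
              · exact h
              · exact absurd h.symm hne01
            have hIsub : I ⊆ {i0, i1} := by
              intro i hiI
              rw [Finset.mem_insert, Finset.mem_singleton]
              by_contra hni
              push_neg at hni
              obtain ⟨hn0, hn1⟩ := hni
              have hge0 : i0 ≤ i := I.min'_le i hiI
              have hge1 : i1 ≤ i := (I.erase i0).min'_le i (Finset.mem_erase.mpr ⟨hn0, hiI⟩)
              have hgt1 : i1 < i := lt_of_le_of_ne hge1 (Ne.symm hn1)
              have : i0.val + 2 ≤ i.val := by
                have h1 : i0.val < i1.val := Fin.lt_def.mp hlt01
                have h2 : i1.val < i.val := Fin.lt_def.mp hgt1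
                omega
              exact hno2 i0 hi0I i hiI this
            have hsum2 : ∑ i ∈ I, (B i).card ≤ ∑ i ∈ ({i0, i1} : Finset (Fin k)), (B i).card :=
              Finset.sum_le_sum_of_subset hIsub
            rw [Finset.sum_pair (Ne.symm hne01)] at hsum2
            have ha0 : Nat.dist x.val (hgt i0).val ≤ ρ := by
              have := hi0I; simp only [hI, Finset.mem_filter, Finset.mem_univ, true_and] at this
              exact this
            have ha1 : Nat.dist x.val (hgt i1).val ≤ ρ := by
              have := hi1I; simp only [hI, Finset.mem_filter, Finset.mem_univ, true_and] at this
              exact this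
            have hb0 := hBbound i0 ha0
            have hb1 := hBbound i1 ha1
            -- the two distances sum to at least r ≥ ρ + 2
            have hgg := hgap' i0 i1 hlt01
            have htri : Nat.dist (hgt i0).val (hgt i1).val ≤
                Nat.dist x.val (hgt i0).val + Nat.dist x.val (hgt i1).val := by
              have := Nat.dist.triangle_inequality (hgt i0).val x.val (hgt i1).val
              rw [Nat.dist_comm (hgt i0).val x.val] at this
              exact this
            have hge : (hgt i1).val - (hgt i0).val ≤ Nat.dist (hgt i0).val (hgt i1).val := by
              rw [Nat.dist]; omega
            omega
      omega
    -- combine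
    have htotal : (k : ℕ) * n ≤ t^2 := by
      calc k * n = F.card := hcardF.symm
        _ ≤ ((Finset.range t).biUnion A).card := Finset.card_le_card hsub
        _ ≤ ∑ j ∈ Finset.range t, (A j).card := Finset.card_biUnion_le
        _ ≤ ∑ j ∈ Finset.range t, (2*(t - 1 - j) + 1) := by
            apply Finset.sum_le_sum
            intro j hjr
            exact hcount j (Finset.mem_range.mp hjr)
        _ = ∑ j ∈ Finset.range t, (2*j + 1) :=
            Finset.sum_range_reflect (fun j => 2*j+1) t
        _ = t^2 := sum_odd t
    have hsq : t^2 ≤ (r-1)^2 := Nat.pow_le_pow_left ht 2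
    have := pred_sq_lt_csq hkn1
    rw [← hrdef] at this
    omega
  · -- upper bound
    rw [hrcast]
    have : pburn (gridGraph m n) S ≤ T := Nat.sInf_le hmemT
    omega
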